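/- For the action of A × A on SL(2,ℝ) by (Aₜ, A_s)·x = Aₜ x A_s⁻¹: the stabilizer of p ∈ SL(2,ℝ) is nontrivial if and only if p ∈ ±(A ∪ JA), where J = E₁₂ − E₂₁; in that case the stabilizer is {(Aₜ, Aₜ) : t ∈ ℝ} when p ∈ ±A and {(Aₜ, A₋ₜ) : t ∈ ℝ} when p ∈ ±JA, while for all other p the stabilizer is trivial. -/

import Mathlib

open Matrix

noncomputable section

local notation "M2" => Matrix (Fin 2) (Fin 2) ℝ
local notation "SL2" => Matrix.SpecialLinearGroup (Fin 2) ℝ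

/-- Aₜ = diag(eᵗ, e⁻ᵗ) -/
def Am (t : ℝ) : M2 := !![Real.exp t, 0; 0, Real.exp (-t)]
/-- J = E₁₂ − E₂₁ -/
def Jm : M2 := !![0, 1; -1, 0]

/-- The stabilizer of `p` for the action of `A × A` on SL(2,ℝ), `(Aₜ,A_s)·x = Aₜ x A_s⁻¹`,
as a set of parameters `(t,s)`. -/
def stabAA (p : SL2) : Set (ℝ × ℝ) := {q | Am q.1 * (p : M2) * (Am q.2)⁻¹ = (p : M2)}

/-- `p` lies in `±A`. -/
def inPMA (p : SL2) : Prop := ∃ t : ℝ, (p : M2) = Am t ∨ (p : M2) = -Am t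

/-- `p` lies in `±JA`. -/
def inPMJA (p : SL2) : Prop := ∃ t : ℝ, (p : M2) = Jm * Am t ∨ (p : M2) = -(Jm * Am t)

lemma Am_mul (t u : ℝ) : Am t * Am u = Am (t + u) := by
  simp only [Am, Matrix.mul_fin_two, ← Real.exp_add]
  norm_num [neg_add, add_comm]

lemma Am_zero : Am 0 = 1 := by
  simp only [Am, neg_zero, Real.exp_zero]
  exact (Matrix.one_fin_two).symm

lemma Am_inv (s : ℝ) : (Am s)⁻¹ = Am (-s) := by
  apply Matrix.inv_eq_right_inv
  rw [Am_mul, add_neg_cancel, Am_zero]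

lemma exp_mul_eq (x v : ℝ) : Real.exp x * v = v ↔ v = 0 ∨ x = 0 := by
  constructor
  · intro h
    rcases eq_or_ne v 0 with hv | hv
    · exact Or.inl hv
    · right
      have h1 : Real.exp x = Real.exp 0 := by
        rw [Real.exp_zero]
        exact mul_right_cancel₀ hv (h.trans (one_mul v).symm)
      exact Real.exp_injective h1
  · rintro (h | h) <;> simp [h, Real.exp_zero]

lemma exp_mul_exp_eq (x y v : ℝ) :
    Real.exp x * v * Real.exp y = v ↔ v = 0 ∨ x + y = 0 := by
  rw [show Real.exp x * v * Real.exp y = Real.exp (x + y) * v by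
    rw [Real.exp_add]; ring, exp_mul_eq]

lemma mem_stab_iff (p : SL2) (t s : ℝ) :
    (t, s) ∈ stabAA p ↔
      ((p : M2) 0 0 = 0 ∨ t + -s = 0) ∧
      ((p : M2) 0 1 = 0 ∨ t + s = 0) ∧
      ((p : M2) 1 0 = 0 ∨ -t + -s = 0) ∧
      ((p : M2) 1 1 = 0 ∨ -t + s = 0) := by
  have h : (t, s) ∈ stabAA p ↔ ∀ i j, (Am t * (p : M2) * Am (-s)) i j = (p : M2) i j := by
    rw [stabAA, Set.mem_setOf_eq, Am_inv, ← Matrix.ext_iff]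
  rw [h]
  simp [Fin.forall_fin_two, Am, Matrix.mul_apply, Matrix.vecMul, dotProduct,
    Fin.sum_univ_two, exp_mul_exp_eq, and_assoc]

lemma det_p (p : SL2) : (p : M2) 0 0 * (p : M2) 1 1 - (p : M2) 0 1 * (p : M2) 1 0 = 1 := by
  have := p.2
  rwa [Matrix.det_fin_two] at this

lemma inPMA_iff (p : SL2) : inPMA p ↔ (p : M2) 0 1 = 0 ∧ (p : M2) 1 0 = 0 := by
  constructor
  · rintro ⟨t, h | h⟩ <;> rw [h] <;> simp [Am]
  · rintro ⟨hb, hc⟩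
    have hdet := det_p p
    rw [hb, hc] at hdet
    simp only [zero_mul, mul_zero, sub_zero] at hdet
    have ha : (p : M2) 0 0 ≠ 0 := by
      intro h; rw [h, zero_mul] at hdet; norm_num at hdet
    rcases lt_or_gt_of_ne ha with hneg | hpos
    · refine ⟨Real.log (-(p : M2) 0 0), Or.inr ?_⟩
      have h1 : Real.exp (Real.log ((p : M2) 0 0)) = -(p : M2) 0 0 := by
        rw [← Real.log_neg_eq_log]; exact Real.exp_log (by linarith)
      have h2 : (p : M2) 1 1 = ((p : M2) 0 0)⁻¹ := by
        field_simp; linarith [hdet]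
      ext i j
      fin_cases i <;> fin_cases j <;>
        simp [Am, hb, hc, h1, h2, Real.exp_neg, neg_inv, -inv_neg]
    · refine ⟨Real.log ((p : M2) 0 0), Or.inl ?_⟩
      have h1 : Real.exp (Real.log ((p : M2) 0 0)) = (p : M2) 0 0 := Real.exp_log hpos
      have h2 : (p : M2) 1 1 = ((p : M2) 0 0)⁻¹ := by
        field_simp; linarith [hdet]
      ext i j
      fin_cases i <;> fin_cases j <;>
        simp [Am, hb, hc, h1, h2, Real.exp_neg]

lemma Jm_mul_Am (t : ℝ) : Jm * Am t = !![0, Real.exp (-t); -Real.exp t, 0] := by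
  simp [Jm, Am, Matrix.mul_fin_two]

lemma inPMJA_iff (p : SL2) : inPMJA p ↔ (p : M2) 0 0 = 0 ∧ (p : M2) 1 1 = 0 := by
  constructor
  · rintro ⟨t, h | h⟩ <;> rw [h, Jm_mul_Am] <;> simp
  · rintro ⟨ha, hd⟩
    have hdet := det_p p
    rw [ha, hd] at hdet
    simp only [zero_mul, mul_zero, zero_sub] at hdet
    have hb : (p : M2) 0 1 ≠ 0 := by
      intro h; rw [h, zero_mul] at hdet; norm_num at hdet
    rcases lt_or_gt_of_ne hb with hneg | hpos
    · refine ⟨-Real.log (-(p : M2) 0 1), Or.inr ?_⟩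
      have h1 : Real.exp (Real.log ((p : M2) 0 1)) = -(p : M2) 0 1 := by
        rw [← Real.log_neg_eq_log]; exact Real.exp_log (by linarith)
      have h2 : (p : M2) 1 0 = -((p : M2) 0 1)⁻¹ := by
        field_simp; linarith [hdet]
      rw [Jm_mul_Am]
      ext i j
      fin_cases i <;> fin_cases j <;>
        simp [ha, hd, h1, h2, Real.exp_neg, neg_inv, neg_neg, -inv_neg]
    · refine ⟨-Real.log ((p : M2) 0 1), Or.inl ?_⟩
      have h1 : Real.exp (Real.log ((p : M2) 0 1)) = (p : M2) 0 1 := Real.exp_log hpos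
      have h2 : (p : M2) 1 0 = -((p : M2) 0 1)⁻¹ := by
        field_simp; linarith [hdet]
      rw [Jm_mul_Am]
      ext i j
      fin_cases i <;> fin_cases j <;>
        simp [ha, hd, h1, h2, Real.exp_neg]

lemma stab_of_pma (p : SL2) (h : inPMA p) : stabAA p = {q : ℝ × ℝ | q.2 = q.1} := by
  rw [inPMA_iff] at h
  obtain ⟨hb, hc⟩ := h
  have hdet := det_p p
  rw [hb, hc] at hdet
  simp only [zero_mul, mul_zero, sub_zero] at hdet
  have ha : (p : M2) 0 0 ≠ 0 := fun h => by rw [h, zero_mul] at hdet; norm_num at hdet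
  have hd : (p : M2) 1 1 ≠ 0 := fun h => by rw [h, mul_zero] at hdet; norm_num at hdet
  ext ⟨t, s⟩
  rw [Set.mem_setOf_eq, show ((t,s) : ℝ × ℝ).2 = t ↔ s = t from Iff.rfl]
  rw [mem_stab_iff]
  constructor
  · rintro ⟨h1 | h1, _, _, h4 | h4⟩ <;> first | exact absurd h1 ha | exact absurd h4 hd | linarith
  · intro hst
    refine ⟨Or.inr (by linarith), Or.inl hb, Or.inl hc, Or.inr (by linarith)⟩

lemma stab_of_pmja (p : SL2) (h : inPMJA p) : stabAA p = {q : ℝ × ℝ | q.2 = -q.1} := by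
  rw [inPMJA_iff] at h
  obtain ⟨ha, hd⟩ := h
  have hdet := det_p p
  rw [ha, hd] at hdet
  simp only [zero_mul, mul_zero, zero_sub] at hdet
  have hb : (p : M2) 0 1 ≠ 0 := fun h => by rw [h, zero_mul] at hdet; norm_num at hdet
  have hc : (p : M2) 1 0 ≠ 0 := fun h => by rw [h, mul_zero] at hdet; norm_num at hdet
  ext ⟨t, s⟩
  rw [Set.mem_setOf_eq, show ((t,s) : ℝ × ℝ).2 = -(t,s).1 ↔ s = -t from Iff.rfl]
  rw [mem_stab_iff]
  constructor
  · rintro ⟨_, h2 | h2, h3 | h3, _⟩ <;>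
      first | exact absurd h2 hb | exact absurd h3 hc | linarith
  · intro hst
    refine ⟨Or.inl ha, Or.inr (by linarith), Or.inr (by linarith), Or.inl hd⟩

lemma stab_triv (p : SL2) (h : ¬ (inPMA p ∨ inPMJA p)) :
    stabAA p = {((0 : ℝ), (0 : ℝ))} := by
  push_neg at h
  obtain ⟨h1, h2⟩ := h
  rw [inPMA_iff] at h1
  rw [inPMJA_iff] at h2
  have hdet := det_p p
  ext ⟨t, s⟩
  simp only [Set.mem_singleton_iff, Prod.mk.injEq, mem_stab_iff]
  constructor
  · rintro ⟨c1, c2, c3, c4⟩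
    -- derive t = s from diagonal, t = -s from off-diagonal
    have hts : t = s := by
      rcases c1 with h | h
      · rcases c4 with h' | h'
        · -- p 0 0 = 0 and p 1 1 = 0: contradiction with h2
          exact absurd ⟨h, h'⟩ h2
        · linarith
      · linarith
    have hts' : t = -s := by
      rcases c2 with h | h
      · rcases c3 with h' | h'
        · exact absurd ⟨h, h'⟩ h1
        · linarith
      · linarith
    constructor <;> linarith
  · rintro ⟨rfl, rfl⟩
    exact ⟨Or.inr (by ring), Or.inr (by ring), Or.inr (by ring), Or.inr (by ring)⟩

theorem AA_stabilizers (p : SL2) :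
    (stabAA p ≠ {((0 : ℝ), (0 : ℝ))} ↔ inPMA p ∨ inPMJA p) ∧
    (inPMA p → stabAA p = {q : ℝ × ℝ | q.2 = q.1}) ∧
    (inPMJA p → stabAA p = {q : ℝ × ℝ | q.2 = -q.1}) ∧
    (¬ (inPMA p ∨ inPMJA p) → stabAA p = {((0 : ℝ), (0 : ℝ))}) := by
  refine ⟨⟨fun hne => ?_, fun hor => ?_⟩, stab_of_pma p, stab_of_pmja p, stab_triv p⟩
  · by_contra h
    exact hne (stab_triv p h)
  · rcases hor with h | h
    · rw [stab_of_pma p h]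
      intro heq
      have : ((1 : ℝ), (1 : ℝ)) ∈ ({q : ℝ × ℝ | q.2 = q.1} : Set (ℝ × ℝ)) := rfl
      rw [heq] at this
      simp at this
    · rw [stab_of_pmja p h]
      intro heq
      have : ((1 : ℝ), (-1 : ℝ)) ∈ ({q : ℝ × ℝ | q.2 = -q.1} : Set (ℝ × ℝ)) := rfl
      rw [heq] at this
      simp at this
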